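/- arXiv:1211.0925 — 2 statements merged into one kernel-verified Lean document; each statement's English description precedes it below -/
import Mathlib

section
/- For every β > 0, the free energy of the non-uniform model satisfies f^nu(β) ≥ β − log 2. -/
open scoped Classical
open Filter

noncomputable section

/-- The three allowed steps: east `(1,0)`, north `(0,1)`, south `(0,-1)`. -/
def stepVec : Fin 3 → ℤ × ℤ := ![(1, 0), (0, 1), (0, -1)]

/-- Position of the partially directed walk after `k` steps,
for a configuration `s` of `L` steps. -/
def pathPos (L : ℕ) (s : Fin L → Fin 3) (k : ℕ) : ℤ × ℤ :=
  ∑ i : Fin L, if (i : ℕ) < k then stepVec (s i) else 0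

/-- `s` encodes a path of `W_L` : it is self-avoiding (all visited sites are
distinct) and its last step is horizontal (step index `0`, i.e. `(1,0)`). -/
def IsPath (L : ℕ) (s : Fin L → Fin 3) : Prop :=
  (∀ j k : ℕ, j ≤ L → k ≤ L → pathPos L s j = pathPos L s k → j = k) ∧
  (∀ hL : 0 < L, s ⟨L - 1, by omega⟩ = 0)

/-- Two lattice sites are adjacent (at euclidean distance 1). -/
def adjacent (p q : ℤ × ℤ) : Prop := |p.1 - q.1| + |p.2 - q.2| = 1

/-- Number of self-touchings: pairs `(i,j)` with `i < j - 1`, `j ≤ L`,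
`‖w_i - w_j‖ = 1`. -/
def numTouch (L : ℕ) (s : Fin L → Fin 3) : ℕ :=
  ((Finset.range (L + 1) ×ˢ Finset.range (L + 1)).filter
    (fun ij => ij.1 + 1 < ij.2 ∧ adjacent (pathPos L s ij.1) (pathPos L s ij.2))).card

/-- The set `W_L` of valid `L`-step configurations. -/
def WL (L : ℕ) : Finset (Fin L → Fin 3) := Finset.univ.filter (IsPath L)

/-- Non-uniform weight of a configuration: each step taken at the origin or
after a horizontal step has weight `1/3`, each step after a vertical step has
weight `1/2`. -/
def nuWeight (L : ℕ) (s : Fin L → Fin 3) : ℝ :=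
  ∏ i : Fin L,
    if (i : ℕ) = 0 then (1 / 3 : ℝ)
    else if s ⟨(i : ℕ) - 1, by have := i.isLt; omega⟩ = 0 then 1 / 3 else 1 / 2

/-- The two models: uniform and non-uniform. -/
inductive Model | u | nu

/-- The law `P^m_L` on `W_L`. -/
def pweight : Model → (L : ℕ) → (Fin L → Fin 3) → ℝ
  | Model.u, L, _ => 1 / ((WL L).card : ℝ)
  | Model.nu, L, s => nuWeight L s

/-- The partition function `Z^m_{L,β} = Σ_{w ∈ W_L} e^{H_{L,β}(w)} P^m_L(w)`,
with Hamiltonian `H_{L,β}(w) = β · (number of self-touchings)`. -/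
def Z (m : Model) (L : ℕ) (β : ℝ) : ℝ :=
  ∑ s ∈ WL L, Real.exp (β * (numTouch L s : ℝ)) * pweight m L s

/-- The normalizing constant `c_β = (1+e^{-β/2})/(1-e^{-β/2})`. -/
def cbeta (β : ℝ) : ℝ := (1 + Real.exp (-β / 2)) / (1 - Real.exp (-β / 2))

/-- The geometric increment law `P_β(v = k) = e^{-(β/2)|k|}/c_β`. -/
def incP (β : ℝ) (k : ℤ) : ℝ := Real.exp (-(β / 2) * |(k : ℝ)|) / cbeta β

/-- Position `V_j` of the random walk built from increments `v`. -/
def Vpos (n : ℕ) (v : Fin n → ℤ) (j : ℕ) : ℤ :=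
  ∑ i : Fin n, if (i : ℕ) < j then v i else 0

/-- The area `A_n = Σ_{j=1}^n |V_j|`. -/
def areaA (n : ℕ) (v : Fin n → ℤ) : ℤ := ∑ j ∈ Finset.Icc 1 n, |Vpos n v j|

/-- Probability under `P_β` of an event `E` depending on the first `n`
increments of the random walk. -/
def wProb (β : ℝ) (n : ℕ) (E : (Fin n → ℤ) → Prop) : ℝ :=
  ∑' v : Fin n → ℤ, if E v then ∏ i : Fin n, incP β (v i) else 0

/-- `P_β(V_{n,k})`: the walk returns to `0` at time `n` with area `A_n = k`. -/
def PV (β : ℝ) (n k : ℕ) : ℝ :=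
  wProb β n fun v => Vpos n v n = 0 ∧ areaA n v = (k : ℤ)

/-- `P_β(V_{n,q})` for rational prescribed area `q`. -/
def PVq (β : ℝ) (n : ℕ) (q : ℚ) : ℝ :=
  wProb β n fun v => Vpos n v n = 0 ∧ (areaA n v : ℚ) = q

/-- `P_β(A_n ≤ α n, V_n = 0)`. -/
def Ple (β : ℝ) (n : ℕ) (α : ℝ) : ℝ :=
  wProb β n fun v => (areaA n v : ℝ) ≤ α * n ∧ Vpos n v n = 0

/-- `P_β(A_n ≤ α n)`. -/
def PleA (β : ℝ) (n : ℕ) (α : ℝ) : ℝ :=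
  wProb β n fun v => (areaA n v : ℝ) ≤ α * n

/-- `P_β(max_{1 ≤ j ≤ n} |V_j| ≤ α)`. -/
def Pmax (β : ℝ) (n : ℕ) (α : ℝ) : ℝ :=
  wProb β n fun v => ∀ j ∈ Finset.Icc 1 n, (|Vpos n v j| : ℝ) ≤ α

/-- `n ∈ N_α`, i.e. `n ≥ 2` and `α n ∈ ℕ`. -/
def Nmem (α : ℚ) (n : ℕ) : Prop := 2 ≤ n ∧ ∃ m : ℕ, α * (n : ℚ) = (m : ℚ)

/-- `g_β(α) = sup_{N ∈ N_α} (1/N) log P_β(V_{N, αN})` for rational `α ≥ 0`. -/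
def gQ (β : ℝ) (α : ℚ) : ℝ :=
  sSup {x : ℝ | ∃ n : ℕ, Nmem α n ∧ x = Real.log (PVq β n (α * n)) / n}

/-- `Γ^u(β) = c_β/e^β`, `Γ^nu(β) = 2c_β/(3e^β)`. -/
def Gam : Model → ℝ → ℝ
  | Model.u, β => cbeta β / Real.exp β
  | Model.nu, β => 2 * cbeta β / (3 * Real.exp β)

/-- `φ^u_β = β - log(1+√2)`, `φ^nu_β = β - log 2`. -/
def phim : Model → ℝ → ℝ
  | Model.u, β => β - Real.log (1 + Real.sqrt 2)
  | Model.nu, β => β - Real.log 2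

end


noncomputable section ZigZag

/-- The zig-zag configuration with columns of height `h`. -/
def zig (h L : ℕ) : Fin L → Fin 3 := fun i =>
  if (i : ℕ) % (h+1) = h then 0
  else if ((i : ℕ) / (h+1)) % 2 = 0 then 1 else 2

lemma pathPos_zero (L : ℕ) (s : Fin L → Fin 3) : pathPos L s 0 = 0 := by
  simp [pathPos]

lemma pathPos_succ (L : ℕ) (s : Fin L → Fin 3) (k : ℕ) (hk : k < L) :
    pathPos L s (k+1) = pathPos L s k + stepVec (s ⟨k, hk⟩) := by
  have key : ∀ i : Fin L, (if (i:ℕ) < k+1 then stepVec (s i) else 0)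
      = (if (i:ℕ) < k then stepVec (s i) else 0)
        + (if i = ⟨k, hk⟩ then stepVec (s i) else 0) := by
    intro i
    rcases lt_trichotomy (i:ℕ) k with h1 | h1 | h1
    · have h4 : (i:ℕ) ≠ k := Nat.ne_of_lt h1
      simp [h1, Nat.lt_succ_of_lt h1, Fin.ext_iff, h4]
    · simp [Fin.ext_iff, h1]
    · have h2 : ¬ (i:ℕ) < k + 1 := by omega
      have h3 : ¬ (i:ℕ) < k := by omega
      have h4 : ¬ (i:ℕ) = k := by omega
      simp [h2, h3, Fin.ext_iff, h4]
  unfold pathPos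
  rw [Finset.sum_congr rfl (fun i _ => key i), Finset.sum_add_distrib,
    Finset.sum_ite_eq' Finset.univ (⟨k, hk⟩ : Fin L)]
  simp

lemma hdiv_eq (h x r : ℕ) (hr : r < h+1) : ((h+1)*x + r) / (h+1) = x := by
  rw [Nat.mul_add_div (Nat.succ_pos h), Nat.div_eq_of_lt hr, Nat.add_zero]

lemma hmod_eq (h x r : ℕ) (hr : r < h+1) : ((h+1)*x + r) % (h+1) = r := by
  rw [Nat.mul_add_mod, Nat.mod_eq_of_lt hr]

lemma zig_pos (h L : ℕ) : ∀ k, k ≤ L →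
    pathPos L (zig h L) k =
      (((k / (h+1) : ℕ) : ℤ),
        if (k / (h+1)) % 2 = 0 then ((k % (h+1) : ℕ) : ℤ)
        else (h : ℤ) - ((k % (h+1) : ℕ) : ℤ)) := by
  intro k
  induction k with
  | zero => intro _; simp [pathPos_zero, Prod.ext_iff]
  | succ k ih =>
    intro hk1
    have hkL : k < L := hk1
    rw [pathPos_succ L _ k hkL, ih (Nat.le_of_lt hkL)]
    have hd := Nat.div_add_mod k (h+1)
    have hrlt : k % (h+1) < h + 1 := Nat.mod_lt _ (Nat.succ_pos h)
    by_cases hc : k % (h+1) = h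
    · have hs : zig h L ⟨k, hkL⟩ = 0 := by simp [zig, hc]
      have hk2 : k + 1 = (h+1) * (k/(h+1) + 1) := by rw [Nat.mul_succ]; omega
      have hdiv : (k+1) / (h+1) = k/(h+1) + 1 := by
        rw [hk2, Nat.mul_div_cancel_left _ (Nat.succ_pos h)]
      have hmod : (k+1) % (h+1) = 0 := by rw [hk2, Nat.mul_mod_right]
      rw [hs, hdiv, hmod, hc]
      by_cases hq : (k/(h+1)) % 2 = 0
      · have hq1 : ¬ (k/(h+1) + 1) % 2 = 0 := by omega
        simp [stepVec, hq, hq1, Prod.ext_iff]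
        all_goals (push_cast; ring)
      · have hq1 : (k/(h+1) + 1) % 2 = 0 := by omega
        simp [stepVec, hq, hq1, Prod.ext_iff]
        all_goals (push_cast; ring)
    · have hk2 : k + 1 = (h+1) * (k/(h+1)) + (k % (h+1) + 1) := by omega
      have hdiv : (k+1)/(h+1) = k/(h+1) := by
        rw [hk2, hdiv_eq h _ _ (by omega)]
      have hmod : (k+1) % (h+1) = k % (h+1) + 1 := by
        rw [hk2, hmod_eq h _ _ (by omega)]
      by_cases hq : (k/(h+1)) % 2 = 0
      · have hs : zig h L ⟨k, hkL⟩ = 1 := by simp [zig, hc, hq]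
        rw [hs, hdiv, hmod]
        simp [stepVec, hq, Prod.ext_iff]
        all_goals (push_cast; ring)
      · have hs : zig h L ⟨k, hkL⟩ = 2 := by simp [zig, hc, hq]
        rw [hs, hdiv, hmod]
        simp [stepVec, hq, Prod.ext_iff]
        all_goals (push_cast; ring)

lemma zig_isPath (h m L : ℕ) (hm : 1 ≤ m) (hL : L = m * (h+1)) :
    IsPath L (zig h L) := by
  constructor
  · intro j k hj hk hpos
    rw [zig_pos h L j hj, zig_pos h L k hk, Prod.mk.injEq] at hpos
    obtain ⟨h1, h2⟩ := hpos
    have hdiv : j / (h+1) = k / (h+1) := by exact_mod_cast h1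
    rw [hdiv] at h2
    have hmod : j % (h+1) = k % (h+1) := by
      by_cases hq : (k/(h+1)) % 2 = 0 <;> simp only [hq, if_true, if_false] at h2 <;> omega
    have e1 := Nat.div_add_mod j (h+1)
    have e2 := Nat.div_add_mod k (h+1)
    rw [hdiv, hmod] at e1
    omega
  · intro hL0
    obtain ⟨m', rfl⟩ : ∃ m', m = m' + 1 := ⟨m - 1, by omega⟩
    have hL1 : L = (h+1) * m' + h + 1 := by rw [hL]; ring
    have hmod : (L - 1) % (h+1) = h := by
      have hL2 : L - 1 = (h+1) * m' + h := by omega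
      rw [hL2, Nat.mul_add_mod, Nat.mod_eq_of_lt (Nat.lt_succ_self h)]
    simp [zig, hmod]

lemma adj_lemma (a b : ℤ) : adjacent (a, b) (a + 1, b) := by
  unfold adjacent
  simp only []
  rw [show a - (a+1) = -1 by ring, show b - b = 0 by ring]
  norm_num

/-- The map exhibiting `(m-1)*h` touchings of the zig-zag path. -/
def ztouch (h : ℕ) (p : ℕ × ℕ) : ℕ × ℕ :=
  if p.1 % 2 = 0 then ((h+1) * p.1 + p.2, (h+1) * (p.1 + 1) + (h - p.2))
  else ((h+1) * p.1 + (h - (p.2 + 1)), (h+1) * (p.1 + 1) + (p.2 + 1))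

lemma zig_touch (h m L : ℕ) (hm : 1 ≤ m) (hL : L = m * (h+1)) :
    (m - 1) * h ≤ numTouch L (zig h L) := by
  classical
  unfold numTouch
  have hcard : ((Finset.range (m-1)) ×ˢ (Finset.range h)).card = (m-1) * h := by
    simp
  rw [← hcard]
  have hL' : L = (h+1) * m := by rw [hL, Nat.mul_comm]
  have hmm : (h+1) * (m-1) + (h+1) = (h+1) * m := by rw [← Nat.mul_succ]; congr 1; omega
  apply Finset.card_le_card_of_injOn (ztouch h)
  · rintro ⟨x, t⟩ hp
    simp only [Finset.coe_product, Set.mem_prod, Finset.mem_coe, Finset.mem_product, Finset.mem_range] at hp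
    obtain ⟨hx, ht⟩ := hp
    have hx1 : (h+1) * (x+1) ≤ (h+1) * (m-1) := Nat.mul_le_mul_left _ (by omega)
    have hsucc : (h+1) * (x+1) = (h+1) * x + (h+1) := Nat.mul_succ _ _
    simp only [Finset.mem_coe, Finset.mem_filter, Finset.mem_product, Finset.mem_range]
    by_cases hpar : x % 2 = 0
    · have hiL : (h+1) * x + t ≤ L := by omega
      have hjL : (h+1) * (x+1) + (h - t) ≤ L := by omega
      have pos_i : pathPos L (zig h L) ((h+1) * x + t) = ((x:ℤ), (t:ℤ)) := by
        rw [zig_pos h L _ hiL, hdiv_eq h x t (by omega), hmod_eq h x t (by omega), if_pos hpar]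
      have pos_j : pathPos L (zig h L) ((h+1) * (x+1) + (h - t)) = ((x:ℤ) + 1, (t:ℤ)) := by
        rw [zig_pos h L _ hjL, hdiv_eq h (x+1) (h-t) (by omega), hmod_eq h (x+1) (h-t) (by omega)]
        have hp1 : ¬ (x+1) % 2 = 0 := by omega
        rw [if_neg hp1]
        simp only [Prod.mk.injEq]
        constructor <;> first | trivial | omega
      refine ⟨⟨?_, ?_⟩, ?_, ?_⟩
      · simp [ztouch, hpar]; omega
      · simp [ztouch, hpar]; omega
      · simp [ztouch, hpar]; omega
      · simp only [ztouch, hpar, if_true]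
        rw [pos_i, pos_j]
        exact adj_lemma _ _
    · have hiL : (h+1) * x + (h - (t+1)) ≤ L := by omega
      have hjL : (h+1) * (x+1) + (t+1) ≤ L := by omega
      have pos_i : pathPos L (zig h L) ((h+1) * x + (h - (t+1))) = ((x:ℤ), (t:ℤ) + 1) := by
        rw [zig_pos h L _ hiL, hdiv_eq h x _ (by omega), hmod_eq h x _ (by omega), if_neg hpar]
        simp only [Prod.mk.injEq]
        constructor <;> first | trivial | omega
      have pos_j : pathPos L (zig h L) ((h+1) * (x+1) + (t+1)) = ((x:ℤ) + 1, (t:ℤ) + 1) := by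
        rw [zig_pos h L _ hjL, hdiv_eq h (x+1) _ (by omega), hmod_eq h (x+1) _ (by omega)]
        have hp1 : (x+1) % 2 = 0 := by omega
        rw [if_pos hp1]
        simp only [Prod.mk.injEq]
        constructor <;> first | trivial | omega
      refine ⟨⟨?_, ?_⟩, ?_, ?_⟩
      · simp [ztouch, hpar]; omega
      · simp [ztouch, hpar]; omega
      · simp [ztouch, hpar]; omega
      · simp only [ztouch, hpar, if_false]
        rw [pos_i, pos_j]
        exact adj_lemma _ _
  · rintro ⟨x, t⟩ hp ⟨x', t'⟩ hp' heq
    simp only [Finset.coe_product, Set.mem_prod, Finset.mem_coe, Finset.mem_range] at hp hp'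
    obtain ⟨hx, ht⟩ := hp
    obtain ⟨hx', ht'⟩ := hp'
    have d1 : (ztouch h (x, t)).1 / (h+1) = x ∧ (ztouch h (x, t)).1 % (h+1)
        = (if x % 2 = 0 then t else h - (t+1)) := by
      by_cases hpar : x % 2 = 0 <;>
        simp only [ztouch, hpar, if_true, if_false] <;>
        exact ⟨hdiv_eq h x _ (by omega), hmod_eq h x _ (by omega)⟩
    have d1' : (ztouch h (x', t')).1 / (h+1) = x' ∧ (ztouch h (x', t')).1 % (h+1)
        = (if x' % 2 = 0 then t' else h - (t'+1)) := by
      by_cases hpar : x' % 2 = 0 <;>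
        simp only [ztouch, hpar, if_true, if_false] <;>
        exact ⟨hdiv_eq h x' _ (by omega), hmod_eq h x' _ (by omega)⟩
    have hx_eq : x = x' := by
      rw [← d1.1, ← d1'.1, heq]
    subst hx_eq
    have hmod_eq2 : (if x % 2 = 0 then t else h - (t+1)) = (if x % 2 = 0 then t' else h - (t'+1)) := by
      rw [← d1.2, ← d1'.2, heq]
    by_cases hpar : x % 2 = 0 <;> simp only [hpar, if_true, if_false] at hmod_eq2 <;>
      exact Prod.ext rfl (by omega)

lemma mod_pred_iff (h i : ℕ) (hi : 1 ≤ i) : (i-1) % (h+1) = h ↔ i % (h+1) = 0 := by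
  constructor
  · intro H
    have e := Nat.div_add_mod (i-1) (h+1)
    have e2 : i = (h+1) * ((i-1)/(h+1) + 1) := by rw [Nat.mul_succ]; omega
    rw [e2, Nat.mul_mod_right]
  · intro H
    have e := Nat.div_add_mod i (h+1)
    have hq : 1 ≤ i / (h+1) := by
      rcases Nat.eq_zero_or_pos (i/(h+1)) with h0 | h0
      · rw [h0, Nat.mul_zero] at e; omega
      · exact h0
    obtain ⟨q', hq'⟩ : ∃ q', i/(h+1) = q' + 1 := ⟨i/(h+1) - 1, by omega⟩
    rw [hq', Nat.mul_succ] at e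
    have e3 : i - 1 = (h+1) * q' + h := by omega
    rw [e3, Nat.mul_add_mod, Nat.mod_eq_of_lt (Nat.lt_succ_self h)]

lemma zig_weight (h m L : ℕ) (hL : L = m * (h+1)) :
    nuWeight L (zig h L) = (1/3 : ℝ)^m * (1/2 : ℝ)^(m*h) := by
  classical
  unfold nuWeight
  have key : ∀ i : Fin L,
      (if (i:ℕ) = 0 then (1/3:ℝ)
       else if zig h L ⟨(i:ℕ)-1, by have := i.isLt; omega⟩ = 0 then 1/3 else 1/2)
      = if (i:ℕ) % (h+1) = 0 then (1/3:ℝ) else 1/2 := by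
    intro i
    by_cases h0 : (i:ℕ) = 0
    · simp [h0]
    · have hi1 : 1 ≤ (i:ℕ) := by omega
      by_cases hmm : (i:ℕ) % (h+1) = 0
      · have hpred : ((i:ℕ)-1) % (h+1) = h := (mod_pred_iff h (i:ℕ) hi1).mpr hmm
        have hz0 : zig h L ⟨(i:ℕ)-1, by have := i.isLt; omega⟩ = 0 := by
          simp [zig, hpred]
        simp [hz0, hmm, h0]
      · have h1 : ¬ ((i:ℕ)-1) % (h+1) = h := fun c => hmm ((mod_pred_iff h _ hi1).mp c)
        have hz0 : ¬ zig h L ⟨(i:ℕ)-1, by have := i.isLt; omega⟩ = 0 := by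
          simp only [zig]
          rw [if_neg h1]
          split_ifs <;> decide
        simp [hz0, hmm, h0]
  rw [Finset.prod_congr rfl (fun i _ => key i)]
  rw [Fin.prod_univ_eq_prod_range (fun i => if i % (h+1) = 0 then (1/3:ℝ) else 1/2) L]
  rw [Finset.prod_ite, Finset.prod_const, Finset.prod_const]
  have himg : (Finset.range L).filter (fun i => i % (h+1) = 0)
      = (Finset.range m).image (fun t => (h+1) * t) := by
    ext i
    simp only [Finset.mem_filter, Finset.mem_range, Finset.mem_image]
    constructor
    · rintro ⟨hiL, him⟩
      refine ⟨i / (h+1), ?_, ?_⟩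
      · rw [Nat.div_lt_iff_lt_mul (Nat.succ_pos h)]
        rw [hL] at hiL
        exact hiL
      · have := Nat.div_add_mod i (h+1); omega
    · rintro ⟨t, ht, rfl⟩
      refine ⟨?_, Nat.mul_mod_right _ _⟩
      rw [hL, Nat.mul_comm m (h+1)]
      exact mul_lt_mul_of_pos_left ht (Nat.succ_pos h)
  have hcard1 : ((Finset.range L).filter (fun i => i % (h+1) = 0)).card = m := by
    rw [himg, Finset.card_image_of_injective _ (mul_right_injective₀ (Nat.succ_ne_zero h)),
      Finset.card_range]
  have hcard2 : ((Finset.range L).filter (fun i => ¬ i % (h+1) = 0)).card = m * h := by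
    have hsum := Finset.card_filter_add_card_filter_not
      (s := Finset.range L) (p := fun i => i % (h+1) = 0)
    rw [Finset.card_range, hcard1] at hsum
    have hms : m * (h+1) = m * h + m := Nat.mul_succ m h
    omega
  rw [hcard1, hcard2]

lemma zig_mem_WL (h m L : ℕ) (hm : 1 ≤ m) (hL : L = m * (h+1)) : zig h L ∈ WL L :=
  Finset.mem_filter.mpr ⟨Finset.mem_univ _, zig_isPath h m L hm hL⟩

lemma nuWeight_nonneg (L : ℕ) (s : Fin L → Fin 3) : 0 ≤ nuWeight L s :=
  Finset.prod_nonneg (by intro i _; split_ifs <;> norm_num)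

lemma Z_lower (β : ℝ) (hβ : 0 ≤ β) (h m L : ℕ) (hm : 1 ≤ m) (hL : L = m * (h+1)) :
    Real.exp (β * (((m-1)*h : ℕ) : ℝ)) * ((1/3:ℝ)^m * (1/2:ℝ)^(m*h)) ≤ Z Model.nu L β := by
  have hmem := zig_mem_WL h m L hm hL
  have hpw : pweight Model.nu L (zig h L) = (1/3:ℝ)^m * (1/2:ℝ)^(m*h) := by
    show nuWeight L (zig h L) = _
    exact zig_weight h m L hL
  have hterm : Real.exp (β * (((m-1)*h : ℕ) : ℝ)) * ((1/3:ℝ)^m * (1/2:ℝ)^(m*h))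
      ≤ Real.exp (β * (numTouch L (zig h L) : ℝ)) * pweight Model.nu L (zig h L) := by
    rw [hpw]
    have h1 : Real.exp (β * (((m-1)*h : ℕ) : ℝ)) ≤ Real.exp (β * (numTouch L (zig h L) : ℝ)) := by
      apply Real.exp_le_exp.mpr
      apply mul_le_mul_of_nonneg_left _ hβ
      exact_mod_cast zig_touch h m L hm hL
    exact mul_le_mul_of_nonneg_right h1 (by positivity)
  refine hterm.trans ?_
  unfold Z
  apply Finset.single_le_sum (f := fun s => Real.exp (β * (numTouch L s : ℝ)) * pweight Model.nu L s)
    ?_ hmem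
  intro s _
  have hpw2 : 0 ≤ pweight Model.nu L s := nuWeight_nonneg L s
  exact mul_nonneg (Real.exp_pos _).le hpw2

end ZigZag

/-- For every `β > 0`, the free energy of the non-uniform model
satisfies `f^nu(β) ≥ β - log 2`. -/
theorem stmt2 (β : ℝ) (hβ : 0 < β) (fnu : ℝ)
    (hf : Filter.Tendsto (fun L : ℕ => Real.log (Z Model.nu L β) / L)
      Filter.atTop (nhds fnu)) :
    fnu ≥ β - Real.log 2 := by
  have hseq : Filter.Tendsto (fun n : ℕ => n * (n+1)) atTop atTop :=
    tendsto_atTop_mono (fun n => Nat.le_mul_of_pos_right n (Nat.succ_pos n)) tendsto_id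
  have hB : Filter.Tendsto
      (fun n : ℕ => Real.log (Z Model.nu (n*(n+1)) β) / ((n*(n+1) : ℕ) : ℝ))
      atTop (nhds fnu) := hf.comp hseq
  have hA : Filter.Tendsto
      (fun n : ℕ => (β - Real.log 2) + (-(2*β) - Real.log 3 + Real.log 2) * (1/((n:ℝ)+1)))
      atTop (nhds (β - Real.log 2)) := by
    have h0 : Filter.Tendsto
        (fun n : ℕ => (-(2*β) - Real.log 3 + Real.log 2) * (1/((n:ℝ)+1))) atTop (nhds 0) := by
      simpa using (tendsto_one_div_add_atTop_nhds_zero_nat).const_mul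
        (-(2*β) - Real.log 3 + Real.log 2)
    simpa using tendsto_const_nhds.add h0
  have key : ∀ᶠ n : ℕ in atTop,
      (β - Real.log 2) + (-(2*β) - Real.log 3 + Real.log 2) * (1/((n:ℝ)+1))
        ≤ Real.log (Z Model.nu (n*(n+1)) β) / ((n*(n+1) : ℕ) : ℝ) := by
    filter_upwards [eventually_ge_atTop 1] with n hn
    have hZ := Z_lower β hβ.le n n (n*(n+1)) hn rfl
    have hpos : (0:ℝ) < Real.exp (β * (((n-1)*n : ℕ) : ℝ)) * ((1/3:ℝ)^n * (1/2:ℝ)^(n*n)) := by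
      positivity
    have hZpos : 0 < Z Model.nu (n*(n+1)) β := lt_of_lt_of_le hpos hZ
    have hlog := Real.log_le_log hpos hZ
    have hlogval : Real.log (Real.exp (β * (((n-1)*n : ℕ) : ℝ)) * ((1/3:ℝ)^n * (1/2:ℝ)^(n*n)))
        = β * (((n:ℝ)-1) * (n:ℝ)) - (n:ℝ) * Real.log 3 - ((n:ℝ)*(n:ℝ)) * Real.log 2 := by
      rw [Real.log_mul (Real.exp_ne_zero _) (by positivity), Real.log_exp,
        Real.log_mul (by positivity) (by positivity), Real.log_pow, Real.log_pow]
      have h3 : Real.log ((1:ℝ)/3) = -Real.log 3 := by rw [one_div, Real.log_inv]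
      have h2 : Real.log ((1:ℝ)/2) = -Real.log 2 := by rw [one_div, Real.log_inv]
      rw [h3, h2]
      push_cast [Nat.cast_sub hn]
      ring
    rw [hlogval] at hlog
    have hLcast : ((n*(n+1) : ℕ) : ℝ) = (n:ℝ) * ((n:ℝ)+1) := by push_cast; ring
    have hn1 : (1:ℝ) ≤ (n:ℝ) := by exact_mod_cast hn
    have hmain : (β - Real.log 2) + (-(2*β) - Real.log 3 + Real.log 2) * (1/((n:ℝ)+1))
        = (β * (((n:ℝ)-1) * (n:ℝ)) - (n:ℝ) * Real.log 3 - ((n:ℝ)*(n:ℝ)) * Real.log 2)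
          / ((n:ℝ) * ((n:ℝ)+1)) := by
      have hne1 : (n:ℝ) ≠ 0 := by linarith
      have hne2 : (n:ℝ) + 1 ≠ 0 := by linarith
      field_simp
      ring
    rw [hmain, hLcast]
    apply div_le_div_of_nonneg_right ?_ ?_ |>.trans_eq rfl
    · exact hlog
    · nlinarith
  have := le_of_tendsto_of_tendsto hA hB key
  linarith
end

section
/- For every β > 0 and every rational α ≥ 0, the limit g_β(α) := lim_{N→∞, N∈N_α} (1/N) log P_β(V_{N, αN}) exists, is finite, is ≤ 0, and equals sup_{N∈N_α} (1/N) log P_β(V_{N, αN}). Moreover g_β(0) = −log c_β. -/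
open scoped Classical
open Filter

section Aux
noncomputable section

variable {β : ℝ}

lemma exp_lt_one (hβ : 0 < β) : Real.exp (-β / 2) < 1 := by
  rw [Real.exp_lt_one_iff]; linarith

lemma cbeta_pos (hβ : 0 < β) : 0 < cbeta β := by
  have h := exp_lt_one hβ
  have h0 := Real.exp_pos (-β / 2)
  unfold cbeta
  apply div_pos <;> linarith

lemma incP_pos (hβ : 0 < β) (k : ℤ) : 0 < incP β k :=
  div_pos (Real.exp_pos _) (cbeta_pos hβ)

lemma incP_eq (k : ℤ) : incP β k = Real.exp (-β/2) ^ k.natAbs / cbeta β := by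
  rw [incP, ← Real.exp_nat_mul]
  congr 1
  rw [Nat.cast_natAbs, Int.cast_abs]
  ring

lemma hasSum_expabs (hβ : 0 < β) :
    HasSum (fun k : ℤ => Real.exp (-β/2) ^ k.natAbs) (cbeta β) := by
  set r := Real.exp (-β/2) with hr
  have hr0 : 0 ≤ r := (Real.exp_pos _).le
  have hr1 : r < 1 := exp_lt_one hβ
  have h1 : HasSum (fun n : ℕ => ((n : ℤ)).natAbs |> (fun m => r ^ m)) (1 - r)⁻¹ := by
    simpa using hasSum_geometric_of_lt_one hr0 hr1
  have h2 : HasSum (fun n : ℕ => r ^ (-((n : ℤ)) - 1).natAbs) (r * (1 - r)⁻¹) := by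
    have : ∀ n : ℕ, r ^ (-((n : ℤ)) - 1).natAbs = r * r ^ n := by
      intro n
      have : (-((n : ℤ)) - 1).natAbs = n + 1 := by omega
      rw [this, pow_succ]; ring
    simpa [this] using (hasSum_geometric_of_lt_one hr0 hr1).mul_left r
  have := HasSum.of_nat_of_neg_add_one (f := fun k : ℤ => r ^ k.natAbs) (by simpa using h1)
    (by
      convert h2 using 2 with n
      congr 1
      omega)
  have hne : 1 - r ≠ 0 := by linarith
  have hcb : cbeta β = (1 - r)⁻¹ + r * (1 - r)⁻¹ := by
    rw [cbeta]
    show (1 + r) / (1 - r) = _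
    field_simp
  rw [hcb]
  exact this

lemma hasSum_incP (hβ : 0 < β) : HasSum (incP β) 1 := by
  have h := (hasSum_expabs hβ).div_const (cbeta β)
  rw [div_self (cbeta_pos hβ).ne'] at h
  have he : incP β = fun k => Real.exp (-β/2) ^ k.natAbs / cbeta β := funext fun k => incP_eq k
  rw [he]
  exact h

def wgt (β : ℝ) (n : ℕ) (v : Fin n → ℤ) : ℝ := ∏ i, incP β (v i)

lemma wgt_pos (hβ : 0 < β) {n : ℕ} (v : Fin n → ℤ) : 0 < wgt β n v :=
  Finset.prod_pos fun i _ => incP_pos hβ _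

lemma hasSum_wgt (hβ : 0 < β) : ∀ n : ℕ, HasSum (wgt β n) 1 := by
  intro n
  induction n with
  | zero =>
    have : wgt β 0 = fun _ => 1 := by
      funext v; simp [wgt]
    rw [this]
    simpa using hasSum_single (α := ℝ) (f := fun _ : Fin 0 → ℤ => (1:ℝ)) default (by
      intro b hb; exact absurd (Subsingleton.elim b default) hb)
  | succ n ih =>
    have hsum : Summable fun x : ℤ × (Fin n → ℤ) => incP β x.1 * wgt β n x.2 :=
      Summable.mul_of_nonneg (hasSum_incP hβ).summable ih.summable
        (fun k => (incP_pos hβ k).le) (fun v => (wgt_pos hβ v).le)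
    have h : HasSum (fun x : ℤ × (Fin n → ℤ) => incP β x.1 * wgt β n x.2) 1 := by
      simpa using (hasSum_incP hβ).mul ih hsum
    have he : (wgt β (n+1)) ∘ (Fin.consEquiv fun _ => ℤ) =
        fun x : ℤ × (Fin n → ℤ) => incP β x.1 * wgt β n x.2 := by
      funext x
      simp [wgt, Fin.consEquiv, Fin.prod_univ_succ]
    exact ((Fin.consEquiv fun _ => ℤ).hasSum_iff).1 (he ▸ h)

lemma hasSum_wgt' (hβ : 0 < β) (n : ℕ) : HasSum (wgt β n) 1 := hasSum_wgt hβ n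

section walk
variable {n m : ℕ} (v1 : Fin n → ℤ) (v2 : Fin m → ℤ)

lemma Vpos_append_left {j : ℕ} (hj : j ≤ n) :
    Vpos (n + m) (Fin.append v1 v2) j = Vpos n v1 j := by
  rw [Vpos, Fin.sum_univ_add]
  have h2 : ∀ i : Fin m,
      (if ((Fin.natAdd n i : Fin (n+m)) : ℕ) < j then Fin.append v1 v2 (Fin.natAdd n i) else 0) = 0 := by
    intro i
    rw [if_neg]
    simp only [Fin.coe_natAdd]
    omega
  rw [Finset.sum_congr rfl fun i _ => h2 i, Finset.sum_const_zero, add_zero, Vpos]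
  refine Finset.sum_congr rfl fun i _ => ?_
  simp [Fin.append_left]

lemma Vpos_append_right (t : ℕ) :
    Vpos (n + m) (Fin.append v1 v2) (n + t) = Vpos n v1 n + Vpos m v2 t := by
  rw [Vpos, Fin.sum_univ_add]
  congr 1
  · rw [Vpos]
    refine Finset.sum_congr rfl fun i _ => ?_
    rw [Fin.append_left, if_pos, if_pos (by omega)]
    simp only [Fin.coe_castAdd]
    omega
  · rw [Vpos]
    refine Finset.sum_congr rfl fun i _ => ?_
    rw [Fin.append_right]
    simp only [Fin.coe_natAdd]
    by_cases h : (i : ℕ) < t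
    · rw [if_pos (by omega), if_pos h]
    · rw [if_neg (by omega), if_neg h]

lemma areaA_append (h1 : Vpos n v1 n = 0) :
    areaA (n + m) (Fin.append v1 v2) = areaA n v1 + areaA m v2 := by
  rw [areaA]
  have hsplit : Finset.Icc 1 (n + m) = Finset.Icc 1 n ∪ Finset.Icc (n+1) (n+m) := by
    ext a
    simp only [Finset.mem_Icc, Finset.mem_union]
    omega
  rw [hsplit, Finset.sum_union (by
    rw [Finset.disjoint_left]
    intro a ha hb
    simp only [Finset.mem_Icc] at ha hb
    omega)]
  congr 1
  · rw [areaA]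
    refine Finset.sum_congr rfl fun j hj => ?_
    simp only [Finset.mem_Icc] at hj
    rw [Vpos_append_left v1 v2 hj.2]
  · rw [areaA]
    rw [show Finset.Icc (n+1) (n+m) = Finset.map (addLeftEmbedding n) (Finset.Icc 1 m) by
      rw [Finset.map_add_left_Icc]]
    rw [Finset.sum_map]
    refine Finset.sum_congr rfl fun t ht => ?_
    show |Vpos (n+m) (Fin.append v1 v2) (n + t)| = _
    rw [Vpos_append_right, h1, zero_add]

lemma Vpos_succ (v : Fin n → ℤ) {j : ℕ} (hj : j < n) :
    Vpos n v (j + 1) = Vpos n v j + v ⟨j, hj⟩ := by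
  have key : ∀ i : Fin n, (if (i:ℕ) < j+1 then v i else 0)
      = (if (i:ℕ) < j then v i else 0) + (if i = ⟨j, hj⟩ then v i else 0) := by
    intro i
    by_cases h : (i : ℕ) < j
    · rw [if_pos (by omega), if_pos h, if_neg (by
        intro hc; rw [hc] at h; simp at h), add_zero]
    · by_cases h2 : i = ⟨j, hj⟩
      · have : (i : ℕ) = j := by rw [h2]
        rw [if_pos (by omega), if_neg h, if_pos h2, zero_add]
      · have : (i : ℕ) ≠ j := fun hc => h2 (Fin.ext hc)
        rw [if_neg (by omega), if_neg h, if_neg h2, add_zero]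
  rw [Vpos, Vpos, Finset.sum_congr rfl (fun i _ => key i), Finset.sum_add_distrib,
    Finset.sum_ite_eq' Finset.univ (⟨j, hj⟩ : Fin n) v]
  simp

lemma Vpos_zero_fun (j : ℕ) : Vpos n (fun _ => 0) j = 0 := by
  simp [Vpos]

lemma area_zero_iff (v : Fin n → ℤ) :
    (Vpos n v n = 0 ∧ (areaA n v : ℚ) = 0) ↔ v = fun _ => 0 := by
  constructor
  · rintro ⟨-, h⟩
    have ha : areaA n v = 0 := by exact_mod_cast h
    have hz : ∀ j ∈ Finset.Icc 1 n, |Vpos n v j| = 0 := by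
      intro j hj
      have := (Finset.sum_eq_zero_iff_of_nonneg (fun j _ => abs_nonneg (Vpos n v j))).1 ha j hj
      exact this
    have hV : ∀ j, j ≤ n → Vpos n v j = 0 := by
      intro j hjn
      rcases Nat.eq_zero_or_pos j with rfl | hj
      · simp [Vpos]
      · exact abs_eq_zero.mp (hz j (Finset.mem_Icc.mpr ⟨hj, hjn⟩))
    funext i
    have h1 := Vpos_succ v i.isLt
    rw [hV _ (by omega), hV _ (by omega)] at h1
    have : v ⟨(i : ℕ), i.isLt⟩ = 0 := by omega
    simpa using this
  · rintro rfl
    refine ⟨Vpos_zero_fun n, ?_⟩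
    simp [areaA, Vpos_zero_fun]

end walk

section prob
variable {β : ℝ}

/-- Indicator with the classical decidability instance, matching `wProb`. -/
def ind (P : Prop) (x : ℝ) : ℝ := if P then x else 0

lemma ind_nonneg {P : Prop} {x : ℝ} (hx : 0 ≤ x) : 0 ≤ ind P x := by
  by_cases h : P <;> simp [ind, h, hx]

lemma ind_le {P : Prop} {x : ℝ} (hx : 0 ≤ x) : ind P x ≤ x := by
  by_cases h : P <;> simp [ind, h, hx]

lemma ind_of_true {P : Prop} (h : P) (x : ℝ) : ind P x = x := by simp [ind, h]

lemma ind_mul (P Q : Prop) (x y : ℝ) : ind P x * ind Q y = ind (P ∧ Q) (x * y) := by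
  by_cases hP : P <;> by_cases hQ : Q <;> simp [ind, hP, hQ]

lemma ind_congr {P Q : Prop} (h : P ↔ Q) (x : ℝ) : ind P x = ind Q x := by
  by_cases hP : P
  · rw [ind_of_true hP, ind_of_true (h.1 hP)]
  · have hQ : ¬Q := fun hq => hP (h.2 hq)
    simp [ind, hP, hQ]

lemma ind_mono {P Q : Prop} {x : ℝ} (hx : 0 ≤ x) (h : P → Q) : ind P x ≤ ind Q x := by
  by_cases hP : P
  · rw [ind_of_true hP, ind_of_true (h hP)]
  · simpa [ind, hP] using ind_nonneg (P := Q) hx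

lemma summable_ind (hβ : 0 < β) (n : ℕ) (E : (Fin n → ℤ) → Prop) :
    Summable (fun v : Fin n → ℤ => ind (E v) (wgt β n v)) :=
  Summable.of_nonneg_of_le (fun v => ind_nonneg (wgt_pos hβ v).le)
    (fun v => ind_le (wgt_pos hβ v).le) (hasSum_wgt' hβ n).summable

lemma wProb_eq (n : ℕ) (E : (Fin n → ℤ) → Prop) :
    wProb β n E = ∑' v : Fin n → ℤ, ind (E v) (wgt β n v) := rfl

lemma wProb_nonneg (hβ : 0 < β) (n : ℕ) (E : (Fin n → ℤ) → Prop) : 0 ≤ wProb β n E := by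
  rw [wProb_eq]
  exact tsum_nonneg fun v => ind_nonneg (wgt_pos hβ v).le

lemma wProb_le_one (hβ : 0 < β) (n : ℕ) (E : (Fin n → ℤ) → Prop) : wProb β n E ≤ 1 := by
  rw [wProb_eq]
  have := Summable.tsum_le_tsum (f := fun v : Fin n → ℤ => ind (E v) (wgt β n v))
    (g := wgt β n) (fun v => ind_le (wgt_pos hβ v).le)
    (summable_ind hβ n E) (hasSum_wgt' hβ n).summable
  rwa [(hasSum_wgt' hβ n).tsum_eq] at this

lemma wProb_single (hβ : 0 < β) (n : ℕ) (E : (Fin n → ℤ) → Prop) (v : Fin n → ℤ)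
    (hv : E v) : wgt β n v ≤ wProb β n E := by
  rw [wProb_eq]
  have := Summable.le_tsum (summable_ind hβ n E) v
    (fun w _ => ind_nonneg (wgt_pos hβ w).le)
  rwa [ind_of_true hv] at this

lemma PVq_pos (hβ : 0 < β) {n : ℕ} {q : ℚ} (hn : 2 ≤ n) (m : ℕ) (hq : (m : ℚ) = q) :
    0 < PVq β n q := by
  classical
  set v : Fin n → ℤ := fun i => if (i : ℕ) = 0 then (m : ℤ) else if (i : ℕ) = 1 then -(m : ℤ) else 0 with hv
  have hVj : ∀ j, Vpos n v j = if 1 ≤ j then (if 2 ≤ j then 0 else (m : ℤ)) else 0 := by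
    intro j
    rw [Vpos]
    rw [show (∑ i : Fin n, if (i : ℕ) < j then v i else 0)
        = ∑ i : Fin n, ((if (i:ℕ) = 0 ∧ 0 < j then (m:ℤ) else 0) +
            (if (i:ℕ) = 1 ∧ 1 < j then -(m:ℤ) else 0)) from
      Finset.sum_congr rfl fun i _ => by
        by_cases h0 : (i : ℕ) = 0
        · simp only [hv, h0]
          by_cases hj : 0 < j <;> simp [hj] <;> omega
        · by_cases h1 : (i : ℕ) = 1
          · simp only [hv, h0, h1]
            by_cases hj : 1 < j <;> simp [hj] <;> omega
          · simp [hv, h0, h1]]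
    rw [Finset.sum_add_distrib]
    have e0 : (∑ i : Fin n, if (i:ℕ) = 0 ∧ 0 < j then (m:ℤ) else 0)
        = if 0 < j then (m : ℤ) else 0 := by
      rw [Finset.sum_eq_single (⟨0, by omega⟩ : Fin n)]
      · simp
      · intro b _ hb
        rw [if_neg]
        rintro ⟨hb0, -⟩
        exact hb (Fin.ext hb0)
      · simp
    have e1 : (∑ i : Fin n, if (i:ℕ) = 1 ∧ 1 < j then -(m:ℤ) else 0)
        = if 1 < j then -(m : ℤ) else 0 := by
      rw [Finset.sum_eq_single (⟨1, by omega⟩ : Fin n)]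
      · simp
      · intro b _ hb
        rw [if_neg]
        rintro ⟨hb0, -⟩
        exact hb (Fin.ext hb0)
      · simp
    rw [e0, e1]
    split_ifs <;> omega
  have hV : Vpos n v n = 0 := by rw [hVj]; simp [show 1 ≤ n by omega, show 2 ≤ n from hn]
  have hA : areaA n v = (m : ℤ) := by
    rw [areaA]
    rw [Finset.sum_eq_single 1]
    · rw [hVj]
      simp
    · intro j hj hj1
      simp only [Finset.mem_Icc] at hj
      rw [hVj, if_pos hj.1, if_pos (by omega)]
      simp
    · intro h
      simp only [Finset.mem_Icc] at h
      omega
  have hle : wgt β n v ≤ PVq β n q := by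
    refine wProb_single hβ n _ v ⟨hV, ?_⟩
    rw [hA, ← hq]
    simp
  exact lt_of_lt_of_le (wgt_pos hβ v) hle

lemma PVq_le_one (hβ : 0 < β) (n : ℕ) (q : ℚ) : PVq β n q ≤ 1 := wProb_le_one hβ n _

set_option maxHeartbeats 2000000 in
lemma PVq_superadd (hβ : 0 < β) (n m : ℕ) (qa qb : ℚ) :
    PVq β n qa * PVq β m qb ≤ PVq β (n + m) (qa + qb) := by
  have hfs := summable_ind hβ n (fun v => Vpos n v n = 0 ∧ (areaA n v : ℚ) = qa)
  have hgs := summable_ind hβ m (fun v => Vpos m v m = 0 ∧ (areaA m v : ℚ) = qb)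
  have hfg : Summable fun x : (Fin n → ℤ) × (Fin m → ℤ) =>
      (ind (Vpos n x.1 n = 0 ∧ (areaA n x.1 : ℚ) = qa) (wgt β n x.1)) *
      (ind (Vpos m x.2 m = 0 ∧ (areaA m x.2 : ℚ) = qb) (wgt β m x.2)) :=
    by refine hfs.mul_of_nonneg hgs ?_ ?_ <;> intro v <;> exact ind_nonneg (wgt_pos hβ v).le
  have hprod : PVq β n qa * PVq β m qb = ∑' x : (Fin n → ℤ) × (Fin m → ℤ),
      (ind (Vpos n x.1 n = 0 ∧ (areaA n x.1 : ℚ) = qa) (wgt β n x.1)) *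
      (ind (Vpos m x.2 m = 0 ∧ (areaA m x.2 : ℚ) = qb) (wgt β m x.2)) := by
    rw [PVq, PVq, wProb_eq, wProb_eq]
    exact Summable.tsum_mul_tsum hfs hgs hfg
  set e := Fin.appendEquiv (α := ℤ) n m with he
  have key : ∀ x : (Fin n → ℤ) × (Fin m → ℤ),
      (ind (Vpos n x.1 n = 0 ∧ (areaA n x.1 : ℚ) = qa) (wgt β n x.1)) *
      (ind (Vpos m x.2 m = 0 ∧ (areaA m x.2 : ℚ) = qb) (wgt β m x.2)) ≤
      ind (Vpos (n+m) (e x) (n+m) = 0 ∧ (areaA (n+m) (e x) : ℚ) = qa + qb) (wgt β (n+m) (e x)) := by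
    rintro ⟨v1, v2⟩
    rw [ind_mul]
    have happ : e (v1, v2) = Fin.append v1 v2 := rfl
    have hwgt : wgt β n v1 * wgt β m v2 = wgt β (n+m) (e (v1, v2)) := by
      rw [happ, wgt, wgt, wgt, Fin.prod_univ_add (fun i => incP β (Fin.append v1 v2 i))]
      congr 1
      · exact Finset.prod_congr rfl fun i _ => by rw [Fin.append_left]
      · exact Finset.prod_congr rfl fun i _ => by rw [Fin.append_right]
    rw [hwgt]
    refine ind_mono (wgt_pos hβ _).le ?_
    rintro ⟨⟨hV1, hA1⟩, ⟨hV2, hA2⟩⟩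
    rw [happ]
    constructor
    · rw [Vpos_append_right, hV1, hV2]; ring
    · rw [areaA_append v1 v2 hV1]; push_cast [hA1, hA2]; ring
  have hFs := summable_ind hβ (n+m) (fun w => Vpos (n+m) w (n+m) = 0 ∧ (areaA (n+m) w : ℚ) = qa + qb)
  have hFe : Summable fun x : (Fin n → ℤ) × (Fin m → ℤ) =>
      ind (Vpos (n+m) (e x) (n+m) = 0 ∧ (areaA (n+m) (e x) : ℚ) = qa + qb) (wgt β (n+m) (e x)) :=
    (e.summable_iff
      (f := fun w => ind (Vpos (n+m) w (n+m) = 0 ∧ (areaA (n+m) w : ℚ) = qa + qb) (wgt β (n+m) w))).2 hFs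
  calc PVq β n qa * PVq β m qb
      = _ := hprod
    _ ≤ ∑' x : (Fin n → ℤ) × (Fin m → ℤ),
        ind (Vpos (n+m) (e x) (n+m) = 0 ∧ (areaA (n+m) (e x) : ℚ) = qa + qb) (wgt β (n+m) (e x)) :=
        Summable.tsum_le_tsum key hfg hFe
    _ = ∑' w : Fin (n+m) → ℤ,
        ind (Vpos (n+m) w (n+m) = 0 ∧ (areaA (n+m) w : ℚ) = qa + qb) (wgt β (n+m) w) :=
        e.tsum_eq (fun w => ind (Vpos (n+m) w (n+m) = 0 ∧ (areaA (n+m) w : ℚ) = qa + qb) (wgt β (n+m) w))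
    _ = PVq β (n + m) (qa + qb) := (wProb_eq _ _).symm

lemma PVq_zero (hβ : 0 < β) (n : ℕ) : PVq β n 0 = (incP β 0) ^ n := by
  have h1 : PVq β n 0 = ∑' v : Fin n → ℤ, ind (v = fun _ => 0) (wgt β n v) := by
    rw [PVq, wProb_eq]
    congr 1
    funext v
    exact ind_congr (area_zero_iff v) _
  rw [h1]
  have h2 : (fun v : Fin n → ℤ => ind (v = fun _ => 0) (wgt β n v))
      = fun v : Fin n → ℤ => if v = (fun _ => 0) then wgt β n (fun _ => 0) else 0 := by
    funext v
    unfold ind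
    split
    · rename_i h; rw [h]
    · rfl
  rw [h2, tsum_ite_eq]
  rw [wgt, Finset.prod_const]
  simp

end prob

lemma fekete (a : ℕ → ℝ) (P : ℕ → Prop)
    (hP2 : ∀ n, P n → 2 ≤ n)
    (hPadd : ∀ p q, P p → P q → P (p + q))
    (hPsub : ∀ p q, P p → P q → 2 ≤ p - q → P (p - q))
    (hex : ∃ n0, P n0)
    (hsuper : ∀ p q, P p → P q → a p + a q ≤ a (p + q))
    (hle : ∀ p, P p → a p ≤ 0) :
    Tendsto (fun n : ℕ => a n / n) (atTop ⊓ Filter.principal {n | P n})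
      (nhds (sSup {x | ∃ n, P n ∧ x = a n / n})) ∧
    sSup {x | ∃ n, P n ∧ x = a n / n} ≤ 0 := by
  set S : Set ℝ := {x | ∃ n, P n ∧ x = a n / n} with hS
  obtain ⟨n', hn'⟩ := hex
  have hne : S.Nonempty := ⟨a n' / n', n', hn', rfl⟩
  have hub : ∀ x ∈ S, x ≤ 0 := by
    rintro x ⟨n, hPn, rfl⟩
    have hn2 : 2 ≤ n := hP2 n hPn
    have hnR : (0:ℝ) ≤ n := by positivity
    exact div_nonpos_iff.mpr (Or.inr ⟨hle n hPn, hnR⟩)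
  have hbdd : BddAbove S := ⟨0, hub⟩
  set L := sSup S with hL
  have hL0 : L ≤ 0 := csSup_le hne hub
  refine ⟨?_, hL0⟩
  rw [Metric.tendsto_nhds]
  intro ε hε
  obtain ⟨x, hxS, hx⟩ := exists_lt_of_lt_csSup hne (show L - ε/2 < L by linarith)
  obtain ⟨n0, hPn0, rfl⟩ := hxS
  have hn02 : 2 ≤ n0 := hP2 n0 hPn0
  have hn0R : (0:ℝ) < n0 := by positivity
  -- key superadditive iteration
  have key : ∀ q r, P r → P (q * n0 + r) ∧ (q:ℝ) * a n0 + a r ≤ a (q * n0 + r) := by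
    intro q
    induction q with
    | zero =>
      intro r hr
      refine ⟨by simpa using hr, ?_⟩
      push_cast
      simp
    | succ q ih =>
      intro r hr
      obtain ⟨hP', hle'⟩ := ih r hr
      have heq : (q+1) * n0 + r = n0 + (q * n0 + r) := by ring
      constructor
      · rw [heq]; exact hPadd _ _ hPn0 hP'
      · rw [heq]
        have := hsuper n0 (q * n0 + r) hPn0 hP'
        push_cast
        nlinarith [this, hle']
  set C : ℝ := (Finset.Icc n0 (2*n0)).inf' (by simp; omega) (fun r => a r) with hC
  have hCn : Tendsto (fun n : ℕ => C / n) atTop (nhds 0) :=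
    tendsto_const_div_atTop_nhds_zero_nat C
  have hCev : ∀ᶠ n : ℕ in atTop, -(ε/2) < C / n :=
    hCn.eventually (eventually_gt_nhds (by linarith))
  rw [eventually_inf_principal]
  filter_upwards [eventually_ge_atTop (2*n0), hCev] with n hn hCn2 hPn
  -- decompose n = q*n0 + r
  obtain ⟨Q, R, hQR, hR⟩ : ∃ Q R, n = n0 * Q + R ∧ R < n0 :=
    ⟨n / n0, n % n0, (Nat.div_add_mod n n0).symm, Nat.mod_lt _ (by omega)⟩
  have hQ2 : 2 ≤ Q := by
    by_contra h
    have hQ1 : Q ≤ 1 := by omega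
    have h2 : n0 * Q ≤ n0 * 1 := Nat.mul_le_mul_left _ hQ1
    omega
  obtain ⟨t, rfl⟩ : ∃ t, Q = t + 2 := ⟨Q - 2, by omega⟩
  have hsum : (t+1) * n0 + (R + n0) = n := by rw [hQR]; ring
  set q := t + 1 with hqdef
  set r := R + n0 with hrdef
  have hrange1 : n0 ≤ r := by omega
  have hrange2 : r < 2*n0 := by omega
  have hPq : P (q * n0) := by
    have h := (key t n0 hPn0).1
    have e : t * n0 + n0 = q * n0 := by rw [hqdef]; ring
    rwa [e] at h
  have hPr : P r := by
    have e2 : n - q * n0 = r := by omega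
    have h3 := hPsub n (q * n0) hPn hPq (by omega)
    rwa [e2] at h3
  have hkey := (key q r hPr).2
  rw [hsum] at hkey
  have hCr : C ≤ a r := Finset.inf'_le _ (Finset.mem_Icc.mpr ⟨hrange1, by omega⟩)
  have hnR : (0:ℝ) < n := by
    have h4 : 2 ≤ n := by omega
    positivity
  have hup : a n / n ≤ L := le_csSup hbdd ⟨n, hPn, rfl⟩
  have hqn : (q:ℝ) * n0 ≤ n := by
    have h5 : q * n0 ≤ n := by omega
    exact_mod_cast h5
  have han0 : a n0 ≤ 0 := hle n0 hPn0
  have h2 : a n0 / n0 ≤ (q:ℝ) * a n0 / n := by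
    rw [div_le_div_iff₀ hn0R hnR]
    nlinarith [hqn, han0, hn0R]
  have h3 : C / n ≤ a r / n := by gcongr
  have h4 : ((q:ℝ) * a n0 + a r) / n ≤ a n / n := by gcongr
  have hchain : a n0 / n0 + C / n ≤ a n / n := by
    calc a n0 / n0 + C / n ≤ (q:ℝ) * a n0 / n + a r / n := by linarith
      _ = ((q:ℝ) * a n0 + a r) / n := by ring
      _ ≤ a n / n := h4
  rw [Real.dist_eq, abs_lt]
  constructor
  · have : L - ε/2 + -(ε/2) < a n / n := by linarith
    linarith
  · linarith

-- Nmem auxiliary lemmas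
lemma Nmem_add {α : ℚ} {p q : ℕ} (hp : Nmem α p) (hq : Nmem α q) : Nmem α (p + q) := by
  obtain ⟨hp2, mp, hmp⟩ := hp
  obtain ⟨hq2, mq, hmq⟩ := hq
  exact ⟨by omega, mp + mq, by push_cast; rw [mul_add, hmp, hmq]⟩

lemma Nmem_sub {α : ℚ} (hα : 0 ≤ α) {p q : ℕ} (hp : Nmem α p) (hq : Nmem α q)
    (h2 : 2 ≤ p - q) : Nmem α (p - q) := by
  obtain ⟨hp2, mp, hmp⟩ := hp
  obtain ⟨hq2, mq, hmq⟩ := hq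
  have hqp : q ≤ p := by omega
  refine ⟨h2, mp - mq, ?_⟩
  have hcast : ((p - q : ℕ) : ℚ) = (p : ℚ) - q := by push_cast [hqp]; ring
  have hle : (mq : ℚ) ≤ (mp : ℚ) := by
    rw [← hmp, ← hmq]
    have : (q : ℚ) ≤ (p : ℚ) := by exact_mod_cast hqp
    nlinarith
  have hmqp : mq ≤ mp := by exact_mod_cast hle
  rw [hcast, mul_sub, hmp, hmq]
  push_cast [hmqp]
  ring

lemma Nmem_exists (α : ℚ) (hα : 0 ≤ α) : Nmem α (2 * α.den) := by
  refine ⟨by have := α.den_pos; omega, 2 * α.num.toNat, ?_⟩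
  have hnum : (α.num.toNat : ℚ) = (α.num : ℚ) := by
    have : 0 ≤ α.num := Rat.num_nonneg.mpr hα
    exact_mod_cast Int.toNat_of_nonneg this
  push_cast [hnum]
  rw [show α * (2 * (α.den : ℚ)) = (α * α.den) * 2 by ring, Rat.mul_den_eq_num]
  ring

end
end Aux

/-- For every `β > 0` and rational `α ≥ 0`, the limit
`g_β(α) = lim_{N→∞, N ∈ N_α} (1/N) log P_β(V_{N,αN})` exists, is finite,
nonpositive, equals the corresponding supremum, and `g_β(0) = -log c_β`. -/
theorem stmt7 (β : ℝ) (hβ : 0 < β) (α : ℚ) (hα : 0 ≤ α) :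
    Filter.Tendsto (fun n : ℕ => Real.log (PVq β n (α * n)) / n)
      (Filter.atTop ⊓ Filter.principal {n : ℕ | Nmem α n}) (nhds (gQ β α)) ∧
    gQ β α ≤ 0 ∧
    gQ β 0 = -Real.log (cbeta β) := by
  have hmain := fekete (fun n => Real.log (PVq β n (α * n))) (Nmem α)
    (fun n hn => hn.1)
    (fun p q hp hq => Nmem_add hp hq)
    (fun p q hp hq h2 => Nmem_sub hα hp hq h2)
    ⟨2 * α.den, Nmem_exists α hα⟩
    (by
      intro p q hp hq
      obtain ⟨hp2, mp, hmp⟩ := hp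
      obtain ⟨hq2, mq, hmq⟩ := hq
      have hPp : 0 < PVq β p (α * p) := PVq_pos hβ hp2 mp hmp.symm
      have hPq : 0 < PVq β q (α * q) := PVq_pos hβ hq2 mq hmq.symm
      have hsup := PVq_superadd hβ p q (α * p) (α * q)
      have heq : α * p + α * q = α * ((p + q : ℕ) : ℚ) := by push_cast; ring
      rw [heq] at hsup
      have h1 : Real.log (PVq β p (α * p)) + Real.log (PVq β q (α * q))
          = Real.log (PVq β p (α * p) * PVq β q (α * q)) :=
        (Real.log_mul hPp.ne' hPq.ne').symm
      rw [h1]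
      exact Real.log_le_log (by positivity) hsup)
    (fun p hp => Real.log_nonpos
      (PVq_pos hβ hp.1 hp.2.choose hp.2.choose_spec.symm).le (PVq_le_one hβ p _))
  obtain ⟨ht, hsup0⟩ := hmain
  have hval : ∀ n : ℕ, 2 ≤ n → Real.log (PVq β n ((0:ℚ) * n)) / n = -Real.log (cbeta β) := by
    intro n hn
    have h0 : (0:ℚ) * (n:ℚ) = 0 := by ring
    rw [h0, PVq_zero hβ]
    have hi : incP β 0 = (cbeta β)⁻¹ := by
      rw [incP]
      norm_num
    rw [hi, Real.log_pow, Real.log_inv]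
    have hn0 : (n:ℝ) ≠ 0 := Nat.cast_ne_zero.mpr (by omega)
    field_simp
  have hset : {x : ℝ | ∃ n : ℕ, Nmem 0 n ∧ x = Real.log (PVq β n ((0:ℚ) * n)) / n}
      = {-Real.log (cbeta β)} := by
    ext x
    simp only [Set.mem_setOf_eq, Set.mem_singleton_iff]
    constructor
    · rintro ⟨n, ⟨hn2, -⟩, rfl⟩
      exact hval n hn2
    · rintro rfl
      exact ⟨2, ⟨le_refl 2, 0, by simp⟩, (hval 2 (le_refl 2)).symm⟩
  refine ⟨ht, hsup0, ?_⟩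
  rw [gQ, hset, csSup_singleton]
end
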